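/- Closedness of the bounded spiked-model constraint set (key step in the proof of Theorem 1): Fix integers p, r, k with k ≤ p and constants 0 < c₁ ≤ c₂ < ∞. Let B be the set of pairs (β, Ω_X) ∈ ℝ^{p×r} × ℝ^{p×p} such that Ω_X is symmetric positive definite with c₁ ≤ λ_min(Ω_X) and λ_max(Ω_X) ≤ c₂, ‖β‖ ≤ c₂ (spectral norm), and there exist a semi-orthogonal U ∈ ℝ^{p×k}, a diagonal positive semi-definite D ∈ ℝ^{k×k}, τ > 0, and γ ∈ ℝ^{k×r} with Ω_X⁻¹ = τ(I_p + UDUᵀ) and β = Uγ. Then B is a closed (and hence, being bounded, compact) subset of ℝ^{p×r} × ℝ^{p×p}: for any sequence {(β^m, Ω_X^m)} in B converging (in spectral norm, equivalently entrywise) to (β⁰, Ω_X⁰), the limit (β⁰, Ω_X⁰) lies in B. -/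

import Mathlib

open Matrix
open scoped BigOperators

noncomputable section

/-- The spectral norm (ℓ²-operator norm) of a real matrix. -/
noncomputable def specNorm {m n : ℕ} (A : Matrix (Fin m) (Fin n) ℝ) : ℝ :=
  ‖LinearMap.toContinuousLinearMap (Matrix.toEuclideanLin A)‖

/-- `c ≤ λ_min(M)` for a symmetric matrix `M`, expressed through the quadratic form. -/
def eigLB {d : ℕ} (M : Matrix (Fin d) (Fin d) ℝ) (c : ℝ) : Prop :=
  ∀ v : Fin d → ℝ, c * (∑ i, v i ^ 2) ≤ v ⬝ᵥ (M *ᵥ v)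

/-- `λ_max(M) ≤ c` for a symmetric matrix `M`, expressed through the quadratic form. -/
def eigUB {d : ℕ} (M : Matrix (Fin d) (Fin d) ℝ) (c : ℝ) : Prop :=
  ∀ v : Fin d → ℝ, v ⬝ᵥ (M *ᵥ v) ≤ c * (∑ i, v i ^ 2)

/-- The bounded spiked-model constraint set `B`: pairs `(β, Ω_X)` with `Ω_X` symmetric
positive definite, `c₁ ≤ λ_min(Ω_X)`, `λ_max(Ω_X) ≤ c₂`, `‖β‖ ≤ c₂`, and
`Ω_X⁻¹ = τ(I_p + U D Uᵀ)`, `β = Uγ` for some semi-orthogonal `U`, diagonal positive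
semi-definite `D`, `τ > 0`, `γ`. -/
def Bset (p r k : ℕ) (c₁ c₂ : ℝ) :
    Set (Matrix (Fin p) (Fin r) ℝ × Matrix (Fin p) (Fin p) ℝ) :=
  {b | b.2.PosDef ∧ eigLB b.2 c₁ ∧ eigUB b.2 c₂ ∧ specNorm b.1 ≤ c₂ ∧
    ∃ (U : Matrix (Fin p) (Fin k) ℝ) (D : Matrix (Fin k) (Fin k) ℝ) (τ : ℝ)
      (γ : Matrix (Fin k) (Fin r) ℝ),
      Uᵀ * U = 1 ∧ D.IsDiag ∧ (∀ i, 0 ≤ D i i) ∧ 0 < τ ∧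
      b.2⁻¹ = τ • (1 + U * D * Uᵀ) ∧ b.1 = U * γ}

/-! ### Auxiliary lemmas -/

lemma continuous_specNorm {m n : ℕ} :
    Continuous fun A : Matrix (Fin m) (Fin n) ℝ => specNorm A := by
  have h : Continuous fun A : Matrix (Fin m) (Fin n) ℝ =>
      (LinearMap.toContinuousLinearMap (Matrix.toEuclideanLin A)) :=
    LinearMap.continuous_of_finiteDimensional
      ((LinearMap.toContinuousLinearMap.toLinearMap).comp
        (Matrix.toEuclideanLin (𝕜 := ℝ) (m := Fin m) (n := Fin n)).toLinearMap)
  exact h.norm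

lemma mulVec_norm_le {m n : ℕ} (A : Matrix (Fin m) (Fin n) ℝ) (v : Fin n → ℝ) :
    ‖(WithLp.equiv 2 (Fin m → ℝ)).symm (A *ᵥ v)‖ ≤
      specNorm A * ‖(WithLp.equiv 2 (Fin n → ℝ)).symm v‖ := by
  have := (LinearMap.toContinuousLinearMap (Matrix.toEuclideanLin A)).le_opNorm
    ((WithLp.equiv 2 (Fin n → ℝ)).symm v)
  simpa [specNorm, Matrix.toEuclideanLin_apply_piLp_toLp] using this

lemma euclidean_norm_of_sum_sq {n : ℕ} {v : Fin n → ℝ} (h : ∑ i, v i ^ 2 = 1) :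
    ‖(WithLp.equiv 2 (Fin n → ℝ)).symm v‖ = 1 := by
  rw [EuclideanSpace.norm_eq]
  simp only [WithLp.equiv_symm_apply, WithLp.ofLp_toLp, Real.norm_eq_abs, sq_abs]
  rw [h, Real.sqrt_one]

lemma sum_sq_pos {d : ℕ} {v : Fin d → ℝ} (hv : v ≠ 0) : 0 < ∑ i, v i ^ 2 := by
  obtain ⟨i, hi⟩ := Function.ne_iff.mp hv
  exact Finset.sum_pos' (fun j _ => sq_nonneg _) ⟨i, Finset.mem_univ i, by
    have : v i ≠ 0 := by simpa using hi
    positivity⟩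

lemma eig_bound {d : ℕ} {Ω : Matrix (Fin d) (Fin d) ℝ} (hΩ : IsUnit Ω.det)
    {c₁ c₂ : ℝ} (hLB : eigLB Ω c₁) (hUB : eigUB Ω c₂) (hc₁ : 0 < c₁)
    {u : Fin d → ℝ} (hu : u ≠ 0) {μ : ℝ} (hμ : 0 < μ) (h : Ω⁻¹ *ᵥ u = μ • u) :
    1/c₂ ≤ μ ∧ μ ≤ 1/c₁ := by
  have h1 : Ω *ᵥ (Ω⁻¹ *ᵥ u) = u := by
    rw [mulVec_mulVec, mul_nonsing_inv _ hΩ, one_mulVec]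
  rw [h, mulVec_smul] at h1
  have h2 : Ω *ᵥ u = μ⁻¹ • u := by
    have h2' := congrArg (μ⁻¹ • ·) h1
    simpa [smul_smul, inv_mul_cancel₀ hμ.ne'] using h2'
  have hS : 0 < ∑ i, u i ^ 2 := sum_sq_pos hu
  have hdot : u ⬝ᵥ (Ω *ᵥ u) = μ⁻¹ * ∑ i, u i ^ 2 := by
    rw [h2, dotProduct_smul, smul_eq_mul]
    congr 1
    simp [dotProduct, sq]
  constructor
  · have := hUB u
    rw [hdot] at this
    have h3 : μ⁻¹ ≤ c₂ := le_of_mul_le_mul_right this hS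
    rw [one_div]
    exact inv_le_of_inv_le₀ hμ h3
  · have := hLB u
    rw [hdot] at this
    have h3 : c₁ ≤ μ⁻¹ := le_of_mul_le_mul_right this hS
    rw [one_div]
    exact le_inv_of_le_inv₀ hc₁ h3

lemma entry_bound {p r : ℕ} (β : Matrix (Fin p) (Fin r) ℝ) (u : Fin p → ℝ)
    (hu : ∑ l, u l ^ 2 = 1) {c : ℝ} (hβ : specNorm β ≤ c) (j : Fin r) :
    |∑ l, u l * β l j| ≤ c := by
  have hx : ‖(WithLp.equiv 2 (Fin p → ℝ)).symm u‖ = 1 := euclidean_norm_of_sum_sq hu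
  have hej : ∑ l, (Pi.single j 1 : Fin r → ℝ) l ^ 2 = 1 := by
    simp [Pi.single_apply, sq]
  have hy : ‖(WithLp.equiv 2 (Fin p → ℝ)).symm (β *ᵥ Pi.single j 1)‖ ≤ c := by
    calc ‖(WithLp.equiv 2 (Fin p → ℝ)).symm (β *ᵥ Pi.single j 1)‖
        ≤ specNorm β * ‖(WithLp.equiv 2 (Fin r → ℝ)).symm (Pi.single j 1)‖ :=
          mulVec_norm_le β _
      _ = specNorm β := by rw [euclidean_norm_of_sum_sq hej, mul_one]
      _ ≤ c := hβ
  have hinner := abs_real_inner_le_norm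
    ((WithLp.equiv 2 (Fin p → ℝ)).symm u)
    ((WithLp.equiv 2 (Fin p → ℝ)).symm (β *ᵥ Pi.single j 1))
  rw [hx, one_mul] at hinner
  have hiv : (inner ℝ ((WithLp.equiv 2 (Fin p → ℝ)).symm u)
      ((WithLp.equiv 2 (Fin p → ℝ)).symm (β *ᵥ Pi.single j 1)) : ℝ) = ∑ l, u l * β l j := by
    rw [PiLp.inner_apply]
    simp [WithLp.equiv_symm_apply, mulVec_single_one, mul_comm]
  rw [hiv] at hinner
  exact hinner.trans hy

lemma UXU_mul {p k : ℕ} (U : Matrix (Fin p) (Fin k) ℝ) (hU : Uᵀ * U = 1)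
    (A B : Matrix (Fin k) (Fin k) ℝ) :
    (U * A * Uᵀ) * (U * B * Uᵀ) = U * (A * B) * Uᵀ := by
  calc (U * A * Uᵀ) * (U * B * Uᵀ) = U * A * (Uᵀ * U * (B * Uᵀ)) := by
        simp only [Matrix.mul_assoc]
    _ = U * (A * B) * Uᵀ := by rw [hU]; simp only [Matrix.one_mul, Matrix.mul_assoc]

lemma sandwich1 {p k : ℕ} (U : Matrix (Fin p) (Fin k) ℝ) (hU : Uᵀ * U = 1)
    (A B : Matrix (Fin k) (Fin k) ℝ) :
    (1 + U * A * Uᵀ) * (1 - U * B * Uᵀ) = 1 + U * (A - B - A * B) * Uᵀ := by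
  have expand : ∀ X Y : Matrix (Fin p) (Fin p) ℝ,
      (1 + X) * (1 - Y) = 1 + (X - Y - X * Y) := by intro X Y; noncomm_ring
  rw [expand, UXU_mul U hU A B]
  congr 1
  simp only [Matrix.sub_mul, Matrix.mul_sub]

lemma sandwich2 {p k : ℕ} (U : Matrix (Fin p) (Fin k) ℝ) (hU : Uᵀ * U = 1)
    (A B : Matrix (Fin k) (Fin k) ℝ) :
    (1 - U * A * Uᵀ) * (1 + U * B * Uᵀ) = 1 + U * (B - A - A * B) * Uᵀ := by
  have expand : ∀ X Y : Matrix (Fin p) (Fin p) ℝ,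
      (1 - X) * (1 + Y) = 1 + (Y - X - X * Y) := by intro X Y; noncomm_ring
  rw [expand, UXU_mul U hU A B]
  congr 1
  simp only [Matrix.sub_mul, Matrix.mul_sub]

lemma spiked_mulVec {p k : ℕ} (U : Matrix (Fin p) (Fin k) ℝ) (hU : Uᵀ * U = 1)
    (D : Matrix (Fin k) (Fin k) ℝ) (hD : D.IsDiag) (τ : ℝ) (i : Fin k) :
    (τ • (1 + U * D * Uᵀ)) *ᵥ (Uᵀ i) = (τ * (1 + D i i)) • (Uᵀ i) := by
  have h1 : Uᵀ i = U *ᵥ Pi.single i 1 := (mulVec_single_one U i).symm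
  have h2 : (U * D * Uᵀ) * U = U * D := by
    rw [Matrix.mul_assoc (U * D) Uᵀ U, hU, Matrix.mul_one]
  have h3 : (U * D * Uᵀ) *ᵥ (Uᵀ i) = D i i • (Uᵀ i) := by
    rw [h1, mulVec_mulVec, h2, ← mulVec_mulVec]
    have h4 : D *ᵥ Pi.single i 1 = D i i • (Pi.single i 1 : Fin k → ℝ) := by
      conv_lhs => rw [← hD.diagonal_diag]
      rw [diagonal_mulVec_single]
      ext l
      simp [Pi.single_apply, diag]
    rw [h4, mulVec_smul]
  rw [smul_mulVec, add_mulVec, one_mulVec, h3]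
  rw [show (Uᵀ i + D i i • Uᵀ i) = (1 + D i i) • Uᵀ i by rw [add_smul, one_smul], smul_smul]

/-! ### Parameter space -/

def pMap (p r k : ℕ)
    (x : Matrix (Fin p) (Fin k) ℝ × Matrix (Fin k) (Fin k) ℝ × ℝ × Matrix (Fin k) (Fin r) ℝ) :
    Matrix (Fin p) (Fin r) ℝ × Matrix (Fin p) (Fin p) ℝ :=
  (x.1 * x.2.2.2, x.2.2.1 • (1 - x.1 * x.2.1 * x.1ᵀ))

def pSet (p r k : ℕ) (c₁ c₂ : ℝ) :
    Set (Matrix (Fin p) (Fin k) ℝ × Matrix (Fin k) (Fin k) ℝ × ℝ × Matrix (Fin k) (Fin r) ℝ) :=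
  {x | x.1ᵀ * x.1 = 1 ∧ x.2.1.IsDiag ∧ (∀ i, x.2.1 i i ∈ Set.Icc (0:ℝ) (1 - c₁/c₂)) ∧
    x.2.2.1 ∈ Set.Icc c₁ c₂ ∧ (∀ i j, |x.2.2.2 i j| ≤ c₂) ∧
    eigLB (pMap p r k x).2 c₁ ∧ eigUB (pMap p r k x).2 c₂ ∧ specNorm (pMap p r k x).1 ≤ c₂}

lemma pMap_continuous (p r k : ℕ) : Continuous (pMap p r k) := by
  have hU : Continuous fun x : Matrix (Fin p) (Fin k) ℝ × Matrix (Fin k) (Fin k) ℝ × ℝ ×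
      Matrix (Fin k) (Fin r) ℝ => x.1 := continuous_fst
  have hE : Continuous fun x : Matrix (Fin p) (Fin k) ℝ × Matrix (Fin k) (Fin k) ℝ × ℝ ×
      Matrix (Fin k) (Fin r) ℝ => x.2.1 := continuous_fst.comp continuous_snd
  have hs : Continuous fun x : Matrix (Fin p) (Fin k) ℝ × Matrix (Fin k) (Fin k) ℝ × ℝ ×
      Matrix (Fin k) (Fin r) ℝ => x.2.2.1 :=
    continuous_fst.comp (continuous_snd.comp continuous_snd)
  have hγ : Continuous fun x : Matrix (Fin p) (Fin k) ℝ × Matrix (Fin k) (Fin k) ℝ × ℝ ×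
      Matrix (Fin k) (Fin r) ℝ => x.2.2.2 :=
    continuous_snd.comp (continuous_snd.comp continuous_snd)
  exact (hU.matrix_mul hγ).prodMk
    (hs.smul (continuous_const.sub ((hU.matrix_mul hE).matrix_mul hU.matrix_transpose)))

lemma pSet_isClosed (p r k : ℕ) (c₁ c₂ : ℝ) : IsClosed (pSet p r k c₁ c₂) := by
  have hU : Continuous fun x : Matrix (Fin p) (Fin k) ℝ × Matrix (Fin k) (Fin k) ℝ × ℝ ×
      Matrix (Fin k) (Fin r) ℝ => x.1 := continuous_fst
  have hE : Continuous fun x : Matrix (Fin p) (Fin k) ℝ × Matrix (Fin k) (Fin k) ℝ × ℝ ×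
      Matrix (Fin k) (Fin r) ℝ => x.2.1 := continuous_fst.comp continuous_snd
  have hs : Continuous fun x : Matrix (Fin p) (Fin k) ℝ × Matrix (Fin k) (Fin k) ℝ × ℝ ×
      Matrix (Fin k) (Fin r) ℝ => x.2.2.1 :=
    continuous_fst.comp (continuous_snd.comp continuous_snd)
  have hγ : Continuous fun x : Matrix (Fin p) (Fin k) ℝ × Matrix (Fin k) (Fin k) ℝ × ℝ ×
      Matrix (Fin k) (Fin r) ℝ => x.2.2.2 :=
    continuous_snd.comp (continuous_snd.comp continuous_snd)
  have hpm := pMap_continuous p r k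
  have hpm2 : Continuous fun x : Matrix (Fin p) (Fin k) ℝ × Matrix (Fin k) (Fin k) ℝ × ℝ ×
      Matrix (Fin k) (Fin r) ℝ => (pMap p r k x).2 := continuous_snd.comp hpm
  have hpm1 : Continuous fun x : Matrix (Fin p) (Fin k) ℝ × Matrix (Fin k) (Fin k) ℝ × ℝ ×
      Matrix (Fin k) (Fin r) ℝ => (pMap p r k x).1 := continuous_fst.comp hpm
  have h1 : IsClosed {x : Matrix (Fin p) (Fin k) ℝ × Matrix (Fin k) (Fin k) ℝ × ℝ ×
      Matrix (Fin k) (Fin r) ℝ | x.1ᵀ * x.1 = 1} :=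
    isClosed_eq (hU.matrix_transpose.matrix_mul hU) continuous_const
  have h2 : IsClosed {x : Matrix (Fin p) (Fin k) ℝ × Matrix (Fin k) (Fin k) ℝ × ℝ ×
      Matrix (Fin k) (Fin r) ℝ | x.2.1.IsDiag} := by
    have e2 : {x : Matrix (Fin p) (Fin k) ℝ × Matrix (Fin k) (Fin k) ℝ × ℝ ×
        Matrix (Fin k) (Fin r) ℝ | x.2.1.IsDiag} =
        ⋂ (i : Fin k), ⋂ (j : Fin k), {x | i ≠ j → x.2.1 i j = 0} := by
      ext x
      constructor
      · intro h
        simp only [Set.mem_iInter, Set.mem_setOf_eq]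
        intro i j hij
        exact h hij
      · intro h
        simp only [Set.mem_iInter, Set.mem_setOf_eq] at h
        intro i j hij
        exact h i j hij
    rw [e2]
    refine isClosed_iInter fun i => isClosed_iInter fun j => ?_
    by_cases hij : i = j
    · simp [hij]
    · have e3 : {x : Matrix (Fin p) (Fin k) ℝ × Matrix (Fin k) (Fin k) ℝ × ℝ ×
          Matrix (Fin k) (Fin r) ℝ | i ≠ j → x.2.1 i j = 0} = {x | x.2.1 i j = 0} := by
        ext x; simp [hij]
      rw [e3]
      exact isClosed_eq (hE.matrix_elem i j) continuous_const
  have h3 : IsClosed {x : Matrix (Fin p) (Fin k) ℝ × Matrix (Fin k) (Fin k) ℝ × ℝ ×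
      Matrix (Fin k) (Fin r) ℝ | ∀ i, x.2.1 i i ∈ Set.Icc (0:ℝ) (1 - c₁/c₂)} := by
    have e3 : {x : Matrix (Fin p) (Fin k) ℝ × Matrix (Fin k) (Fin k) ℝ × ℝ ×
        Matrix (Fin k) (Fin r) ℝ | ∀ i, x.2.1 i i ∈ Set.Icc (0:ℝ) (1 - c₁/c₂)} =
        ⋂ (i : Fin k), {x | x.2.1 i i ∈ Set.Icc (0:ℝ) (1 - c₁/c₂)} := by
      ext x; simp
    rw [e3]
    exact isClosed_iInter fun i => IsClosed.preimage (hE.matrix_elem i i) isClosed_Icc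
  have h4 : IsClosed {x : Matrix (Fin p) (Fin k) ℝ × Matrix (Fin k) (Fin k) ℝ × ℝ ×
      Matrix (Fin k) (Fin r) ℝ | x.2.2.1 ∈ Set.Icc c₁ c₂} :=
    IsClosed.preimage hs isClosed_Icc
  have h5 : IsClosed {x : Matrix (Fin p) (Fin k) ℝ × Matrix (Fin k) (Fin k) ℝ × ℝ ×
      Matrix (Fin k) (Fin r) ℝ | ∀ i j, |x.2.2.2 i j| ≤ c₂} := by
    have e5 : {x : Matrix (Fin p) (Fin k) ℝ × Matrix (Fin k) (Fin k) ℝ × ℝ ×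
        Matrix (Fin k) (Fin r) ℝ | ∀ i j, |x.2.2.2 i j| ≤ c₂} =
        ⋂ (i : Fin k), ⋂ (j : Fin r), {x | |x.2.2.2 i j| ≤ c₂} := by
      ext x; simp
    rw [e5]
    exact isClosed_iInter fun i => isClosed_iInter fun j =>
      isClosed_le (hγ.matrix_elem i j).abs continuous_const
  have h6 : IsClosed {x : Matrix (Fin p) (Fin k) ℝ × Matrix (Fin k) (Fin k) ℝ × ℝ ×
      Matrix (Fin k) (Fin r) ℝ | eigLB (pMap p r k x).2 c₁} := by
    have e6 : {x : Matrix (Fin p) (Fin k) ℝ × Matrix (Fin k) (Fin k) ℝ × ℝ ×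
        Matrix (Fin k) (Fin r) ℝ | eigLB (pMap p r k x).2 c₁} =
        ⋂ (v : Fin p → ℝ), {x | c₁ * (∑ i, v i ^ 2) ≤ v ⬝ᵥ ((pMap p r k x).2 *ᵥ v)} := by
      ext x; simp [eigLB]
    rw [e6]
    exact isClosed_iInter fun v => isClosed_le continuous_const
      (continuous_const.dotProduct (hpm2.matrix_mulVec continuous_const))
  have h7 : IsClosed {x : Matrix (Fin p) (Fin k) ℝ × Matrix (Fin k) (Fin k) ℝ × ℝ ×
      Matrix (Fin k) (Fin r) ℝ | eigUB (pMap p r k x).2 c₂} := by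
    have e7 : {x : Matrix (Fin p) (Fin k) ℝ × Matrix (Fin k) (Fin k) ℝ × ℝ ×
        Matrix (Fin k) (Fin r) ℝ | eigUB (pMap p r k x).2 c₂} =
        ⋂ (v : Fin p → ℝ), {x | v ⬝ᵥ ((pMap p r k x).2 *ᵥ v) ≤ c₂ * (∑ i, v i ^ 2)} := by
      ext x; simp [eigUB]
    rw [e7]
    exact isClosed_iInter fun v => isClosed_le
      (continuous_const.dotProduct (hpm2.matrix_mulVec continuous_const))
      continuous_const
  have h8 : IsClosed {x : Matrix (Fin p) (Fin k) ℝ × Matrix (Fin k) (Fin k) ℝ × ℝ ×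
      Matrix (Fin k) (Fin r) ℝ | specNorm (pMap p r k x).1 ≤ c₂} :=
    isClosed_le (continuous_specNorm.comp hpm1) continuous_const
  exact h1.inter (h2.inter (h3.inter (h4.inter (h5.inter (h6.inter (h7.inter h8))))))

lemma box_isCompact (a b : ℕ) (c : ℝ) :
    IsCompact (Set.univ.pi fun _ : Fin a => Set.univ.pi fun _ : Fin b => Set.Icc (-c) c) :=
  isCompact_univ_pi fun _ => isCompact_univ_pi fun _ => isCompact_Icc

lemma pSet_isCompact (p r k : ℕ) (c₁ c₂ : ℝ) (hc₁ : 0 < c₁) (hc₁₂ : c₁ ≤ c₂) :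
    IsCompact (pSet p r k c₁ c₂) := by
  have hc₂ : 0 < c₂ := hc₁.trans_le hc₁₂
  set K := (Set.univ.pi fun _ : Fin p => Set.univ.pi fun _ : Fin k => Set.Icc (-(1:ℝ)) 1) ×ˢ
    ((Set.univ.pi fun _ : Fin k => Set.univ.pi fun _ : Fin k => Set.Icc (-(1:ℝ)) 1) ×ˢ
      (Set.Icc c₁ c₂ ×ˢ
        (Set.univ.pi fun _ : Fin k => Set.univ.pi fun _ : Fin r => Set.Icc (-c₂) c₂))) with hK
  have hKc : IsCompact K :=
    (box_isCompact p k 1).prod ((box_isCompact k k 1).prod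
      (isCompact_Icc.prod (box_isCompact k r c₂)))
  refine IsCompact.of_isClosed_subset hKc (pSet_isClosed p r k c₁ c₂) ?_
  rintro ⟨U, E, s, γ⟩ ⟨hUU, hEdiag, hEb, hs, hγb, -, -, -⟩
  have hcolsum : ∀ i, ∑ l, U l i ^ 2 = 1 := by
    intro i
    have := congrFun (congrFun hUU i) i
    simpa [mul_apply, sq] using this
  refine ⟨?_, ?_, hs, ?_⟩
  · intro l _
    intro i _
    have h1 : U l i ^ 2 ≤ 1 := by
      rw [← hcolsum i]
      exact Finset.single_le_sum (f := fun l' => U l' i ^ 2)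
        (fun l' _ => sq_nonneg _) (Finset.mem_univ l)
    have := (sq_le_one_iff_abs_le_one (U l i)).mp h1
    exact abs_le.mp this
  · intro i _
    intro j _
    by_cases hij : i = j
    · subst hij
      obtain ⟨h0, h1⟩ := hEb i
      constructor
      · linarith
      · have : 0 ≤ c₁ / c₂ := le_of_lt (div_pos hc₁ hc₂)
        linarith
    · rw [hEdiag (fun h => hij h)]
      constructor <;> norm_num
  · intro i _
    intro j _
    exact abs_le.mp (hγb i j)

lemma image_subset_Bset (p r k : ℕ) (c₁ c₂ : ℝ) (hc₁ : 0 < c₁) (hc₁₂ : c₁ ≤ c₂) :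
    pMap p r k '' pSet p r k c₁ c₂ ⊆ Bset p r k c₁ c₂ := by
  have hc₂ : 0 < c₂ := hc₁.trans_le hc₁₂
  rintro b ⟨⟨U, E, s, γ⟩, ⟨hUU, hEdiag, hEb, hsmem, hγb, hLB, hUB, hβn⟩, rfl⟩
  dsimp only [pMap] at hUU hEdiag hEb hsmem hγb hLB hUB hβn ⊢
  have hspos : 0 < s := hc₁.trans_le hsmem.1
  have hE1 : ∀ i, 0 < 1 - E i i := by
    intro i
    have := (hEb i).2
    have hdiv : 0 < c₁ / c₂ := div_pos hc₁ hc₂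
    linarith
  set d : Fin k → ℝ := fun i => E i i / (1 - E i i) with hd
  set Ω : Matrix (Fin p) (Fin p) ℝ := s • (1 - U * E * Uᵀ) with hΩ
  have hEd : Eᵀ = E := by
    conv_lhs => rw [← hEdiag.diagonal_diag]
    rw [diagonal_transpose, hEdiag.diagonal_diag]
  have hherm : Ω.IsHermitian := by
    show Ωᴴ = Ω
    rw [conjTranspose_eq_transpose_of_trivial, hΩ, transpose_smul, transpose_sub,
      transpose_one, transpose_mul, transpose_mul, transpose_transpose, hEd,
      ← Matrix.mul_assoc]
  have hrinv : Ω * (s⁻¹ • (1 + U * (diagonal d) * Uᵀ)) = 1 := by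
    rw [hΩ, Matrix.smul_mul, Matrix.mul_smul, smul_smul, mul_inv_cancel₀ hspos.ne',
      sandwich2 U hUU]
    have hz : diagonal d - E - E * diagonal d = 0 := by
      conv_lhs => rw [← hEdiag.diagonal_diag]
      rw [diagonal_mul_diagonal, diagonal_sub, diagonal_sub]
      have : ∀ i, d i - E.diag i - E.diag i * d i = 0 := by
        intro i
        have hne : (1 - E i i) ≠ 0 := (hE1 i).ne'
        simp only [diag, hd]
        field_simp
        ring
      rw [show (fun i => d i - E.diag i - E.diag i * d i) = fun _ => (0:ℝ) from funext this]
      exact diagonal_zero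
    rw [hz, Matrix.mul_zero, Matrix.zero_mul, add_zero, one_smul]
  refine ⟨Matrix.PosDef.of_dotProduct_mulVec_pos hherm ?_, hLB, hUB, hβn, U, diagonal d, s⁻¹, γ, hUU, isDiag_diagonal d,
    ?_, inv_pos.mpr hspos, inv_eq_right_inv hrinv, rfl⟩
  · intro v hv
    have h1 := hLB v
    have h2 : 0 < c₁ * ∑ i, v i ^ 2 := mul_pos hc₁ (sum_sq_pos hv)
    have : star v = v := by
      funext l; simp
    rw [this]
    calc (0:ℝ) < c₁ * ∑ i, v i ^ 2 := h2
      _ ≤ v ⬝ᵥ ((s • (1 - U * E * Uᵀ)) *ᵥ v) := h1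
  · intro i
    rw [diagonal_apply_eq]
    exact div_nonneg (hEb i).1 (hE1 i).le

lemma exists_ker {p k : ℕ} (hlt : k < p) (U : Matrix (Fin p) (Fin k) ℝ) :
    ∃ v : Fin p → ℝ, v ≠ 0 ∧ Uᵀ *ᵥ v = 0 := by
  by_contra h
  push_neg at h
  have hinj : Function.Injective (Matrix.mulVecLin Uᵀ) := by
    intro x y hxy
    by_contra hne
    exact h (x - y) (sub_ne_zero.mpr hne)
      (by rw [← Matrix.mulVecLin_apply, map_sub, hxy, sub_self])
  have hle := LinearMap.finrank_le_finrank_of_injective hinj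
  rw [Module.finrank_fintype_fun_eq_card, Module.finrank_fintype_fun_eq_card,
    Fintype.card_fin, Fintype.card_fin] at hle
  omega

lemma Bset_subset_image (p r k : ℕ) (hkp : k ≤ p) (c₁ c₂ : ℝ)
    (hc₁ : 0 < c₁) (hc₁₂ : c₁ ≤ c₂) :
    Bset p r k c₁ c₂ ⊆ pMap p r k '' pSet p r k c₁ c₂ := by
  have hc₂ : 0 < c₂ := hc₁.trans_le hc₁₂
  rintro ⟨β, Ω⟩ ⟨hpd, hLB, hUB, hβn, U, D, τ, γ, hUU, hDdiag, hDpos, hτ, hInv, hβ⟩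
  dsimp only at hpd hLB hUB hβn hInv hβ
  have hdet : IsUnit Ω.det := hpd.det_pos.ne'.isUnit
  have hcolsum : ∀ i, ∑ l, U l i ^ 2 = 1 := by
    intro i
    have := congrFun (congrFun hUU i) i
    simpa [mul_apply, sq] using this
  have hcol : ∀ i, Uᵀ i ≠ 0 := by
    intro i h0
    have hz : ∑ l, U l i ^ 2 = 0 := by
      apply Finset.sum_eq_zero
      intro l _
      have : U l i = 0 := by
        have := congrFun h0 l
        simpa [transpose_apply] using this
      rw [this]; ring
    rw [hcolsum i] at hz
    norm_num at hz
  have hμpos : ∀ i, 0 < τ * (1 + D i i) := fun i => mul_pos hτ (by linarith [hDpos i])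
  have hμ : ∀ i, 1/c₂ ≤ τ * (1 + D i i) ∧ τ * (1 + D i i) ≤ 1/c₁ := fun i =>
    eig_bound hdet hLB hUB hc₁ (hcol i) (hμpos i)
      (by rw [hInv]; exact spiked_mulVec U hUU D hDdiag τ i)
  have hγeq : Uᵀ * β = γ := by rw [hβ, ← Matrix.mul_assoc, hUU, Matrix.one_mul]
  have hγb : ∀ i j, |γ i j| ≤ c₂ := by
    intro i j
    rw [← hγeq]
    have : (Uᵀ * β) i j = ∑ l, U l i * β l j := by
      simp [mul_apply, transpose_apply]
    rw [this]
    exact entry_bound β (fun l => U l i) (hcolsum i) hβn j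
  suffices h : ∃ (s : ℝ) (e : Fin k → ℝ), s ∈ Set.Icc c₁ c₂ ∧
      (∀ i, e i ∈ Set.Icc (0:ℝ) (1 - c₁/c₂)) ∧
      Ω⁻¹ * (s • (1 - U * diagonal e * Uᵀ)) = 1 by
    obtain ⟨s, e, hs, he, hid⟩ := h
    have hN : Ω = s • (1 - U * diagonal e * Uᵀ) := by
      have h1 := inv_eq_right_inv hid
      rwa [nonsing_inv_nonsing_inv Ω hdet] at h1
    refine ⟨(U, diagonal e, s, γ), ⟨hUU, isDiag_diagonal e, ?_, hs, hγb, ?_, ?_, ?_⟩, ?_⟩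
    · intro i
      show diagonal e i i ∈ Set.Icc (0:ℝ) (1 - c₁/c₂)
      rw [diagonal_apply_eq]; exact he i
    · dsimp only [pMap]; rw [← hN]; exact hLB
    · dsimp only [pMap]; rw [← hN]; exact hUB
    · dsimp only [pMap]; rw [← hβ]; exact hβn
    · dsimp only [pMap]
      exact Prod.ext hβ.symm hN.symm
  rcases lt_or_eq_of_le hkp with hlt | heq
  · -- k < p : τ itself is pinned in [1/c₂, 1/c₁]
    obtain ⟨v, hv0, hv⟩ := exists_ker hlt U
    have hvec : Ω⁻¹ *ᵥ v = τ • v := by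
      rw [hInv, smul_mulVec, add_mulVec, one_mulVec, ← mulVec_mulVec, hv,
        mulVec_zero, add_zero]
    have hτb := eig_bound hdet hLB hUB hc₁ hv0 hτ hvec
    have hd1 : ∀ i, (0:ℝ) < 1 + D i i := fun i => by linarith [hDpos i]
    refine ⟨τ⁻¹, fun i => D i i / (1 + D i i), ⟨?_, ?_⟩, ?_, ?_⟩
    · -- c₁ ≤ τ⁻¹
      have h1 : c₁ * τ ≤ 1 := by
        have := hτb.2
        calc c₁ * τ ≤ c₁ * (1/c₁) := by
              apply mul_le_mul_of_nonneg_left this hc₁.le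
          _ = 1 := by field_simp
      rw [← one_div, le_div_iff₀ hτ]
      linarith
    · -- τ⁻¹ ≤ c₂
      have h1 : 1 ≤ c₂ * τ := by
        have := hτb.1
        calc (1:ℝ) = c₂ * (1/c₂) := by field_simp
          _ ≤ c₂ * τ := by apply mul_le_mul_of_nonneg_left this hc₂.le
      rw [← one_div, div_le_iff₀ hτ]
      linarith
    · intro i
      have hd := hDpos i
      constructor
      · exact div_nonneg hd (hd1 i).le
      · have h3 : c₁ * (1 + D i i) ≤ c₂ := by
          have hC : (1 + D i i)/c₂ ≤ 1/c₁ := by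
            calc (1 + D i i)/c₂ = (1/c₂) * (1 + D i i) := by ring
              _ ≤ τ * (1 + D i i) := mul_le_mul_of_nonneg_right hτb.1 (hd1 i).le
              _ ≤ 1/c₁ := (hμ i).2
          have := (div_le_div_iff₀ hc₂ hc₁).mp hC
          linarith
        have h4 : (c₁/c₂) * (1 + D i i) ≤ 1 := by
          rw [div_mul_eq_mul_div, div_le_one hc₂]
          linarith
        rw [div_le_iff₀ (hd1 i)]
        nlinarith
    · rw [hInv, Matrix.smul_mul, Matrix.mul_smul, smul_smul, mul_inv_cancel₀ hτ.ne',
        sandwich1 U hUU]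
      have hz : D - diagonal (fun i => D i i / (1 + D i i)) -
          D * diagonal (fun i => D i i / (1 + D i i)) = 0 := by
        ext i j
        rw [Matrix.sub_apply, Matrix.sub_apply, mul_diagonal, Matrix.zero_apply]
        by_cases hij : i = j
        · subst hij
          rw [diagonal_apply_eq]
          have hne : (1 + D i i) ≠ 0 := (hd1 i).ne'
          field_simp
          ring
        · rw [diagonal_apply_ne _ hij, hDdiag hij]
          ring
      rw [hz, Matrix.mul_zero, Matrix.zero_mul, add_zero, one_smul]
  · -- k = p
    subst heq
    have hUUT : U * Uᵀ = 1 := mul_eq_one_comm.mp hUU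
    have hd1 : ∀ i, (0:ℝ) < 1 + D i i := fun i => by linarith [hDpos i]
    have hcμ : ∀ i, (0:ℝ) < c₂ * (τ * (1 + D i i)) := fun i => mul_pos hc₂ (hμpos i)
    refine ⟨c₂, fun i => 1 - 1/(c₂ * (τ * (1 + D i i))), ⟨hc₁₂, le_refl c₂⟩, ?_, ?_⟩
    · intro i
      have hb := hμ i
      constructor
      · have h1 : (1:ℝ) ≤ c₂ * (τ * (1 + D i i)) := by
          calc (1:ℝ) = c₂ * (1/c₂) := by field_simp
            _ ≤ c₂ * (τ * (1 + D i i)) := mul_le_mul_of_nonneg_left hb.1 hc₂.le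
        have h2 : 1/(c₂ * (τ * (1 + D i i))) ≤ 1 := by
          rw [div_le_one (hcμ i)]
          exact h1
        linarith
      · have h2 : c₁ * (c₂ * (τ * (1 + D i i))) ≤ c₂ := by
          have : c₁ * (τ * (1 + D i i)) ≤ 1 := by
            calc c₁ * (τ * (1 + D i i)) ≤ c₁ * (1/c₁) :=
                mul_le_mul_of_nonneg_left hb.2 hc₁.le
              _ = 1 := by field_simp
          nlinarith
        have h3 : c₁/c₂ ≤ 1/(c₂ * (τ * (1 + D i i))) := by
          rw [div_le_div_iff₀ hc₂ (hcμ i)]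
          nlinarith
        linarith
    · rw [hInv, Matrix.smul_mul, Matrix.mul_smul, smul_smul, sandwich1 U hUU]
      have hz : D - diagonal (fun i => 1 - 1/(c₂ * (τ * (1 + D i i)))) -
          D * diagonal (fun i => 1 - 1/(c₂ * (τ * (1 + D i i)))) =
          (1/(c₂ * τ) - 1) • (1 : Matrix (Fin k) (Fin k) ℝ) := by
        ext i j
        rw [Matrix.sub_apply, Matrix.sub_apply, mul_diagonal, Matrix.smul_apply, smul_eq_mul]
        by_cases hij : i = j
        · subst hij
          rw [diagonal_apply_eq, one_apply_eq]
          have hne : (1 + D i i) ≠ 0 := (hd1 i).ne'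
          field_simp
          ring
        · rw [diagonal_apply_ne _ hij, hDdiag hij, one_apply_ne hij]
          ring
      rw [hz, Matrix.mul_smul, Matrix.mul_one, Matrix.smul_mul, hUUT]
      rw [show (1 : Matrix (Fin k) (Fin k) ℝ) + (1/(c₂ * τ) - 1) • 1 =
          (1/(c₂ * τ)) • (1 : Matrix (Fin k) (Fin k) ℝ) from by module]
      rw [smul_smul]
      rw [show τ * c₂ * (1/(c₂ * τ)) = 1 from by field_simp]
      exact one_smul ℝ 1

/-- Closedness of the bounded spiked-model constraint set: `B` is a closed subset of
`ℝ^{p×r} × ℝ^{p×p}` (with the entrywise topology, which coincides with the spectral-norm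
topology in finite dimensions); being bounded, it is therefore compact. -/
theorem Bset_isClosed (p r k : ℕ) (hk : 0 < k) (hkp : k ≤ p) (c₁ c₂ : ℝ)
    (hc₁ : 0 < c₁) (hc₁₂ : c₁ ≤ c₂) :
    IsClosed (Bset p r k c₁ c₂) := by
  have himg : Bset p r k c₁ c₂ = pMap p r k '' pSet p r k c₁ c₂ :=
    le_antisymm (Bset_subset_image p r k hkp c₁ c₂ hc₁ hc₁₂)
      (image_subset_Bset p r k c₁ c₂ hc₁ hc₁₂)
  rw [himg]
  exact ((pSet_isCompact p r k c₁ c₂ hc₁ hc₁₂).image (pMap_continuous p r k)).isClosed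

end
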